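/- For all x in (0, π/2), the function f(x) = (1 - e^{x·cot(x) - 1})/(1 - cos(x)) is strictly decreasing, and its range is ((e-1)/e, 2/3). -/

import Mathlib

open Real Set

lemma aux_nonneg (f f' : ℝ → ℝ) (hder : ∀ x, HasDerivAt f (f' x) x)
    (h0 : f 0 = 0) (hpos : ∀ x, 0 ≤ x → 0 ≤ f' x) {x : ℝ} (hx : 0 ≤ x) : 0 ≤ f x := by
  have hm : MonotoneOn f (Ici 0) := by
    apply monotoneOn_of_deriv_nonneg (convex_Ici 0)
      (fun y _ => (hder y).continuousAt.continuousWithinAt)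
      (fun y hy => ((hder y).differentiableAt).differentiableWithinAt)
    intro y hy
    rw [(hder y).deriv]
    exact hpos y (le_of_lt (by simpa using hy))
  have := hm (self_mem_Ici) hx hx
  rwa [h0] at this

lemma sin_ge_poly {x : ℝ} (hx : 0 ≤ x) : x - x^3/6 ≤ sin x := by
  have := aux_nonneg (fun x => sin x - (x - x^3/6)) (fun x => cos x - (1 - x^2/2))
    (fun y => by
      have h := (Real.hasDerivAt_sin y).sub ((hasDerivAt_id y).sub ((hasDerivAt_pow 3 y).div_const 6))
      exact h.congr_deriv (by simp; try ring))
    (by norm_num) (fun y _ => by nlinarith [Real.one_sub_sq_div_two_le_cos (x := y)]) hx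
  linarith [this]

lemma cos_le_poly {x : ℝ} (hx : 0 ≤ x) : cos x ≤ 1 - x^2/2 + x^4/24 := by
  have := aux_nonneg (fun x => 1 - x^2/2 + x^4/24 - cos x) (fun x => -x + x^3/6 + sin x)
    (fun y => by
      have h := (((hasDerivAt_const y (1:ℝ)).sub ((hasDerivAt_pow 2 y).div_const 2)).add
        ((hasDerivAt_pow 4 y).div_const 24)).sub (Real.hasDerivAt_cos y)
      exact h.congr_deriv (by simp; try ring))
    (by norm_num) (fun y hy => by nlinarith [sin_ge_poly hy]) hx
  linarith [this]

lemma sin_le_poly {x : ℝ} (hx : 0 ≤ x) : sin x ≤ x - x^3/6 + x^5/120 := by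
  have := aux_nonneg (fun x => x - x^3/6 + x^5/120 - sin x) (fun x => 1 - x^2/2 + x^4/24 - cos x)
    (fun y => by
      have h := (((hasDerivAt_id y).sub ((hasDerivAt_pow 3 y).div_const 6)).add
        ((hasDerivAt_pow 5 y).div_const 120)).sub (Real.hasDerivAt_sin y)
      exact h.congr_deriv (by simp; try ring))
    (by norm_num) (fun y hy => by nlinarith [cos_le_poly hy]) hx
  linarith [this]

lemma cos_ge_poly {x : ℝ} (hx : 0 ≤ x) : 1 - x^2/2 + x^4/24 - x^6/720 ≤ cos x := by
  have := aux_nonneg (fun x => cos x - (1 - x^2/2 + x^4/24 - x^6/720))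
    (fun x => -sin x + x - x^3/6 + x^5/120)
    (fun y => by
      have h := (Real.hasDerivAt_cos y).sub ((((hasDerivAt_const y (1:ℝ)).sub
        ((hasDerivAt_pow 2 y).div_const 2)).add ((hasDerivAt_pow 4 y).div_const 24)).sub
        ((hasDerivAt_pow 6 y).div_const 720))
      exact h.congr_deriv (by simp; try ring))
    (by norm_num) (fun y hy => by nlinarith [sin_le_poly hy]) hx
  linarith [this]

lemma sin_ge_poly7 {x : ℝ} (hx : 0 ≤ x) : x - x^3/6 + x^5/120 - x^7/5040 ≤ sin x := by
  have := aux_nonneg (fun x => sin x - (x - x^3/6 + x^5/120 - x^7/5040))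
    (fun x => cos x - (1 - x^2/2 + x^4/24 - x^6/720))
    (fun y => by
      have h := (Real.hasDerivAt_sin y).sub ((((hasDerivAt_id y).sub
        ((hasDerivAt_pow 3 y).div_const 6)).add ((hasDerivAt_pow 5 y).div_const 120)).sub
        ((hasDerivAt_pow 7 y).div_const 5040))
      exact h.congr_deriv (by simp; try ring))
    (by norm_num) (fun y hy => by nlinarith [cos_ge_poly hy]) hx
  linarith [this]

lemma a_ge_poly {x : ℝ} (hx : 0 ≤ x) :
    x^3/3 - x^5/30 + x^7/840 - x^9/45360 ≤ sin x - x * cos x := by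
  have := aux_nonneg (fun x => sin x - x * cos x - (x^3/3 - x^5/30 + x^7/840 - x^9/45360))
    (fun x => x * sin x - (x^2 - x^4/6 + x^6/120 - x^8/5040))
    (fun y => by
      have h := ((Real.hasDerivAt_sin y).sub ((hasDerivAt_id y).mul (Real.hasDerivAt_cos y))).sub
        (((((hasDerivAt_pow 3 y).div_const 3).sub ((hasDerivAt_pow 5 y).div_const 30)).add
        ((hasDerivAt_pow 7 y).div_const 840)).sub ((hasDerivAt_pow 9 y).div_const 45360))
      exact h.congr_deriv (by simp; try ring))
    (by norm_num) (fun y hy => by nlinarith [sin_ge_poly7 hy]) hx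
  linarith [this]

lemma a_le_poly {x : ℝ} (hx : 0 ≤ x) : sin x - x * cos x ≤ x^3/3 := by
  have := aux_nonneg (fun x => x^3/3 - (sin x - x * cos x)) (fun x => x^2 - x * sin x)
    (fun y => by
      have h := ((hasDerivAt_pow 3 y).div_const 3).sub
        ((Real.hasDerivAt_sin y).sub ((hasDerivAt_id y).mul (Real.hasDerivAt_cos y)))
      exact h.congr_deriv (by simp; try ring))
    (by norm_num) (fun y hy => by show (0:ℝ) ≤ y^2 - y * sin y; nlinarith [mul_nonneg hy (sub_nonneg.2 (Real.sin_le hy))]) hx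
  linarith [this]


-- exp lower: for t ≥ 0, 1 + t + t^2/2 + t^3/6 ≤ exp t
lemma exp_ge_cubic {t : ℝ} (ht : 0 ≤ t) : 1 + t + t^2/2 + t^3/6 ≤ exp t := by
  have h2 : ∀ y : ℝ, 0 ≤ y → 1 + y + y^2/2 ≤ exp y := by
    intro y hy
    have := aux_nonneg (fun x => exp x - (1 + x + x^2/2)) (fun x => exp x - (1 + x))
      (fun z => by
        have h := (Real.hasDerivAt_exp z).sub (((hasDerivAt_const z (1:ℝ)).add
          (hasDerivAt_id z)).add ((hasDerivAt_pow 2 z).div_const 2))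
        exact h.congr_deriv (by simp; try ring))
      (by norm_num) (fun z _ => by nlinarith [Real.add_one_le_exp z]) hy
    linarith [this]
  have := aux_nonneg (fun x => exp x - (1 + x + x^2/2 + x^3/6)) (fun x => exp x - (1 + x + x^2/2))
    (fun z => by
      have h := (Real.hasDerivAt_exp z).sub ((((hasDerivAt_const z (1:ℝ)).add
        (hasDerivAt_id z)).add ((hasDerivAt_pow 2 z).div_const 2)).add
        ((hasDerivAt_pow 3 z).div_const 6))
      exact h.congr_deriv (by simp; try ring))
    (by norm_num) (fun z hz => by have := h2 z hz; linarith) ht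
  linarith [this]

-- for t ≤ 0: exp t ≤ 1 + t + t^2/2  and  1 + t + t^2/2 + t^3/6 ≤ exp t
lemma exp_le_quad_neg {t : ℝ} (ht : t ≤ 0) : exp t ≤ 1 + t + t^2/2 := by
  have hy : 0 ≤ -t := by linarith
  have := aux_nonneg (fun y => 1 - y + y^2/2 - exp (-y)) (fun y => -1 + y + exp (-y))
    (fun z => by
      have h := (((hasDerivAt_const z (1:ℝ)).sub (hasDerivAt_id z)).add
        ((hasDerivAt_pow 2 z).div_const 2)).sub (((hasDerivAt_id z).neg).exp)
      exact h.congr_deriv (by simp; try ring))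
    (by norm_num) (fun z _ => by nlinarith [Real.add_one_le_exp (-z)]) hy
  simp only [neg_neg] at this; nlinarith [this]

lemma exp_ge_cubic_neg {t : ℝ} (ht : t ≤ 0) : 1 + t + t^2/2 + t^3/6 ≤ exp t := by
  have hy : 0 ≤ -t := by linarith
  have := aux_nonneg (fun y => exp (-y) - (1 - y + y^2/2 - y^3/6))
    (fun y => -exp (-y) + 1 - y + y^2/2)
    (fun z => by
      have h := (((hasDerivAt_id z).neg).exp).sub ((((hasDerivAt_const z (1:ℝ)).sub
        (hasDerivAt_id z)).add ((hasDerivAt_pow 2 z).div_const 2)).sub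
        ((hasDerivAt_pow 3 z).div_const 6))
      exact h.congr_deriv (by simp; try ring))
    (by norm_num) (fun z hz => by
      have := exp_le_quad_neg (t := -z) (by linarith); nlinarith) hy
  simp only [neg_neg] at this; nlinarith [this]

-- key polynomial positivity
lemma Rpos {y : ℝ} (h0 : 0 ≤ y) (h1 : y ≤ 2.47) :
    0 < 1/180 + y/11340 - 47*y^2/56700 + 41*y^3/302400 - 331*y^4/28576800
      + 11*y^5/16934400 - 79*y^6/2939328000 + 701*y^7/864162432000
      - y^8/57610828800 + y^9/4147979673600 - y^10/559977255936000 := by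
  nlinarith [sq_nonneg y, sq_nonneg (y-1), sq_nonneg (y-2), pow_le_pow_left₀ h0 h1 2,
    pow_le_pow_left₀ h0 h1 4, pow_le_pow_left₀ h0 h1 6, pow_le_pow_left₀ h0 h1 8,
    pow_le_pow_left₀ h0 h1 10, mul_nonneg h0 h0]
set_option maxHeartbeats 1000000 in
lemma key_ineq {x : ℝ} (hx0 : 0 < x) (hx1 : x ≤ 1.5708) :
    (x - sin x * cos x) * (1 - cos x)
      < (exp ((sin x - x * cos x)/sin x) - 1) * (sin x)^3 := by
  have hxsq : x^2 ≤ 2.47 := by nlinarith [mul_le_mul hx1 hx1 hx0.le (by norm_num : (0:ℝ) ≤ 1.5708)]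
  have hslo : x - x^3/6 + x^5/120 - x^7/5040 ≤ sin x := sin_ge_poly7 hx0.le
  have hslo_pos : 0 < x - x^3/6 + x^5/120 - x^7/5040 := by
    have h1 : 0 < x*(1 - x^2/6) := mul_pos hx0 (by nlinarith)
    have h2 : 0 ≤ x^5*(1/120 - x^2/5040) := mul_nonneg (by positivity) (by nlinarith)
    nlinarith [h1, h2]
  have hs_pos : 0 < sin x := lt_of_lt_of_le hslo_pos hslo
  have halo : x^3/3 - x^5/30 + x^7/840 - x^9/45360 ≤ sin x - x * cos x := a_ge_poly hx0.le
  have halo_pos : 0 < x^3/3 - x^5/30 + x^7/840 - x^9/45360 := by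
    have h1 : 0 < x^3*(1/3 - x^2/30) := mul_pos (by positivity) (by nlinarith)
    have h2 : 0 ≤ x^7*(1/840 - x^2/45360) := mul_nonneg (by positivity) (by nlinarith)
    nlinarith [h1, h2]
  have ha_pos : 0 < sin x - x * cos x := lt_of_lt_of_le halo_pos halo
  -- b upper bound via sin(2x)
  have hsin2 : 2*x - (2*x)^3/6 + (2*x)^5/120 - (2*x)^7/5040 ≤ sin (2*x) :=
    sin_ge_poly7 (by linarith)
  have hsin2eq : sin (2*x) = 2 * sin x * cos x := Real.sin_two_mul x
  have hb_hi : x - sin x * cos x ≤ 2*x^3/3 - 2*x^5/15 + 4*x^7/315 := by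
    rw [hsin2eq] at hsin2; nlinarith [hsin2]
  have hb_nn : 0 ≤ x - sin x * cos x := by
    have h2 : sin (2*x) ≤ 2*x := Real.sin_le (by linarith)
    rw [hsin2eq] at h2; linarith
  have hd_hi : 1 - cos x ≤ x^2/2 - x^4/24 + x^6/720 := by
    have := cos_ge_poly hx0.le; linarith
  have hd_nn : 0 ≤ 1 - cos x := by linarith [Real.cos_le_one x]
  have hbhi_nn : (0:ℝ) ≤ 2*x^3/3 - 2*x^5/15 + 4*x^7/315 := by nlinarith
  -- product bounds
  have hbd : (x - sin x * cos x) * (1 - cos x)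
      ≤ (2*x^3/3 - 2*x^5/15 + 4*x^7/315) * (x^2/2 - x^4/24 + x^6/720) :=
    mul_le_mul hb_hi hd_hi hd_nn hbhi_nn
  have hchain : (x - x^3/6 + x^5/120 - x^7/5040)^2 * (x^3/3 - x^5/30 + x^7/840 - x^9/45360)
      + (x - x^3/6 + x^5/120 - x^7/5040) * (x^3/3 - x^5/30 + x^7/840 - x^9/45360)^2/2
      + (x^3/3 - x^5/30 + x^7/840 - x^9/45360)^3/6
      ≤ (sin x)^2 * (sin x - x*cos x) + sin x * (sin x - x*cos x)^2/2
        + (sin x - x*cos x)^3/6 := by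
    gcongr <;> positivity
  have hR := Rpos (y := x^2) (by positivity) hxsq
  have hid : (x - x^3/6 + x^5/120 - x^7/5040)^2 * (x^3/3 - x^5/30 + x^7/840 - x^9/45360)
      + (x - x^3/6 + x^5/120 - x^7/5040) * (x^3/3 - x^5/30 + x^7/840 - x^9/45360)^2/2
      + (x^3/3 - x^5/30 + x^7/840 - x^9/45360)^3/6
      - (2*x^3/3 - 2*x^5/15 + 4*x^7/315) * (x^2/2 - x^4/24 + x^6/720)
      = x^7 * (1/180 + x^2/11340 - 47*(x^2)^2/56700 + 41*(x^2)^3/302400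
        - 331*(x^2)^4/28576800 + 11*(x^2)^5/16934400 - 79*(x^2)^6/2939328000
        + 701*(x^2)^7/864162432000 - (x^2)^8/57610828800 + (x^2)^9/4147979673600
        - (x^2)^10/559977255936000) := by ring
  have hx7 : 0 < x^7 * (1/180 + x^2/11340 - 47*(x^2)^2/56700 + 41*(x^2)^3/302400
        - 331*(x^2)^4/28576800 + 11*(x^2)^5/16934400 - 79*(x^2)^6/2939328000
        + 701*(x^2)^7/864162432000 - (x^2)^8/57610828800 + (x^2)^9/4147979673600
        - (x^2)^10/559977255936000) := by positivity
  -- exp bound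
  set y := (sin x - x * cos x)/sin x with hy
  have hy_pos : 0 < y := div_pos ha_pos hs_pos
  have hexp : 1 + y + y^2/2 + y^3/6 ≤ exp y := exp_ge_cubic hy_pos.le
  have hys : (y + y^2/2 + y^3/6) * (sin x)^3
      = (sin x)^2 * (sin x - x*cos x) + sin x * (sin x - x*cos x)^2/2
        + (sin x - x*cos x)^3/6 := by
    rw [hy]; field_simp
  have hfin : (y + y^2/2 + y^3/6) * (sin x)^3 ≤ (exp y - 1) * (sin x)^3 :=
    mul_le_mul_of_nonneg_right (by linarith [hexp]) (by positivity)
  linarith [hbd, hchain, hfin, hid.ge, hid.le, hx7]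
noncomputable def Ff : ℝ → ℝ := fun x => (1 - Real.exp (x * (Real.cos x / Real.sin x) - 1)) / (1 - Real.cos x)

lemma d_pos {x : ℝ} (hx0 : 0 < x) (hx1 : x ≤ 1.5708) : 0 < 1 - cos x := by
  have h := cos_le_poly hx0.le
  have hxsq : x^2 ≤ 2.47 := by nlinarith [mul_le_mul hx1 hx1 hx0.le (by norm_num : (0:ℝ) ≤ 1.5708)]
  nlinarith [mul_pos (mul_pos hx0 hx0) (show (0:ℝ) < 1/2 - x^2/24 by nlinarith)]

lemma deriv_Ff_neg {x : ℝ} (hx0 : 0 < x) (hx1 : x ≤ 1.5708) (hxpi : x < π) :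
    deriv Ff x < 0 := by
  have hs : 0 < sin x := sin_pos_of_pos_of_lt_pi hx0 hxpi
  have hd : 0 < 1 - cos x := d_pos hx0 hx1
  have hsc : sin x ^ 2 + cos x ^ 2 = 1 := sin_sq_add_cos_sq x
  have h1 : HasDerivAt (fun y : ℝ => cos y / sin y)
      ((-sin x * sin x - cos x * cos x) / (sin x)^2) x :=
    (Real.hasDerivAt_cos x).div (Real.hasDerivAt_sin x) hs.ne'
  have h2 : HasDerivAt (fun y : ℝ => y * (cos y / sin y))
      (1 * (cos x / sin x) + x * ((-sin x * sin x - cos x * cos x) / (sin x)^2)) x :=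
    (hasDerivAt_id x).mul h1
  have h3 := (h2.sub_const 1).exp
  have h5 := (hasDerivAt_const x (1:ℝ)).sub h3
  have h6 : HasDerivAt (fun y : ℝ => 1 - cos y) (sin x) x := by
    simpa using (Real.hasDerivAt_cos x).const_sub 1
  have h7 := h5.div h6 hd.ne'
  have hD : deriv Ff x = ((0 - exp (x * (cos x / sin x) - 1) *
      (1 * (cos x / sin x) + x * ((-sin x * sin x - cos x * cos x) / (sin x)^2))) * (1 - cos x)
      - (1 - exp (x * (cos x / sin x) - 1)) * sin x) / (1 - cos x)^2 := h7.deriv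
  rw [hD]
  have hxg : x * (cos x / sin x) - 1 = -((sin x - x * cos x)/sin x) := by
    field_simp
    ring
  rw [hxg, Real.exp_neg]
  set E := exp ((sin x - x * cos x)/sin x) with hE
  have hEpos : 0 < E := exp_pos _
  have hkey := key_ineq hx0 hx1
  rw [← hE] at hkey
  have hnum : (0 - E⁻¹ *
      (1 * (cos x / sin x) + x * ((-sin x * sin x - cos x * cos x) / (sin x)^2))) * (1 - cos x)
      - (1 - E⁻¹) * sin x
      = (E⁻¹ / (sin x)^2) * ((x - sin x * cos x) * (1 - cos x) - (E - 1) * (sin x)^3) := by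
    have hq : -sin x * sin x - cos x * cos x = -1 := by linear_combination -hsc
    rw [hq]
    field_simp
    ring
  rw [hnum]
  apply div_neg_of_neg_of_pos _ (by positivity)
  apply mul_neg_of_pos_of_neg (by positivity)
  linarith
lemma pi_half_lt : π/2 < 1.5708 := by
  have := Real.pi_lt_d6; linarith

lemma contFf : ContinuousOn Ff (Ioc 0 (π/2)) := by
  have hs : ∀ x ∈ Ioc (0:ℝ) (π/2), sin x ≠ 0 := by
    intro x hx
    exact (sin_pos_of_pos_of_lt_pi hx.1 (lt_of_le_of_lt hx.2 (half_lt_self pi_pos))).ne'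
  have hd : ∀ x ∈ Ioc (0:ℝ) (π/2), 1 - cos x ≠ 0 := by
    intro x hx
    exact (d_pos hx.1 (hx.2.trans pi_half_lt.le)).ne'
  apply ContinuousOn.div
  · exact (continuousOn_const.sub (((continuousOn_id.mul
      (Real.continuousOn_cos.div Real.continuousOn_sin hs)).sub continuousOn_const).rexp))
  · exact continuousOn_const.sub Real.continuousOn_cos
  · exact hd

lemma SA_Ioc : StrictAntiOn Ff (Ioc 0 (π/2)) := by
  apply strictAntiOn_of_deriv_neg (convex_Ioc 0 (π/2)) contFf
  intro x hx
  rw [interior_Ioc] at hx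
  exact deriv_Ff_neg hx.1 (le_of_lt (hx.2.trans pi_half_lt))
    (hx.2.trans (half_lt_self pi_pos))

lemma Ff_endpoint : Ff (π/2) = (exp 1 - 1) / exp 1 := by
  unfold Ff
  rw [Real.cos_pi_div_two, Real.sin_pi_div_two]
  norm_num
  rw [Real.exp_neg]
  have := Real.exp_pos 1
  field_simp
lemma Ff_upper {x : ℝ} (hx0 : 0 < x) (hx1 : x ≤ 1) :
    Ff x ≤ (1/3)/((1 - x^2/6)*(1/2 - x^2/24)) := by
  have hx2 : x^2 ≤ 1 := by nlinarith
  have hx31 : x^3 ≤ x := by nlinarith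
  have h16 : (0:ℝ) < 1 - x^2/6 := by nlinarith
  have h124 : (0:ℝ) < 1/2 - x^2/24 := by nlinarith
  have hs : 0 < sin x := sin_pos_of_pos_of_lt_pi hx0
    (lt_of_le_of_lt hx1 (by linarith [Real.pi_gt_three]))
  have hd : 0 < 1 - cos x := d_pos hx0 (by linarith)
  have hslo : 0 < x - x^3/6 := by nlinarith
  have hdlo : 0 < x^2/2 - x^4/24 := by nlinarith
  have hsx : x - x^3/6 ≤ sin x := sin_ge_poly hx0.le
  have hdx : x^2/2 - x^4/24 ≤ 1 - cos x := by linarith [cos_le_poly hx0.le]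
  have ha : sin x - x*cos x ≤ x^3/3 := a_le_poly hx0.le
  have h1 : 1 - exp (x * (cos x / sin x) - 1) ≤ (sin x - x*cos x)/sin x := by
    have h2 := Real.add_one_le_exp (x * (cos x / sin x) - 1)
    have h3 : (sin x - x*cos x)/sin x = 1 - (x * (cos x / sin x)) := by field_simp
    rw [h3]; linarith
  have hq0 : (0:ℝ) < (x^3/3)/(x - x^3/6) := div_pos (by positivity) hslo
  have hy1 : (sin x - x*cos x)/sin x ≤ (x^3/3)/(x - x^3/6) :=
    div_le_div₀ (by positivity) ha hslo hsx
  calc Ff x ≤ ((x^3/3)/(x - x^3/6))/(1 - cos x) := by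
        unfold Ff
        exact (div_le_div_iff_of_pos_right hd).2 (h1.trans hy1)
    _ ≤ ((x^3/3)/(x - x^3/6))/(x^2/2 - x^4/24) :=
        div_le_div_of_nonneg_left hq0.le hdlo hdx
    _ = (1/3)/((1 - x^2/6)*(1/2 - x^2/24)) := by
        rw [div_div, div_eq_div_iff (mul_pos hslo hdlo).ne' (mul_pos h16 h124).ne']
        ring

set_option maxHeartbeats 1000000 in
lemma Ff_lower {x : ℝ} (hx0 : 0 < x) (hx1 : x ≤ 1) :
    (2/3 - x^2/15)*(1 - x^2/4) ≤ Ff x := by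
  have hx2 : x^2 ≤ 1 := by nlinarith
  have hx31 : x^3 ≤ x := by nlinarith
  have hx53 : x^5 ≤ x^3 := by
    calc x^5 = x^3 * x^2 := by ring
      _ ≤ x^3 * 1 := mul_le_mul_of_nonneg_left hx2 (pow_pos hx0 3).le
      _ = x^3 := by ring
  have hx97 : x^9 ≤ x^7 := by
    calc x^9 = x^7 * x^2 := by ring
      _ ≤ x^7 * 1 := mul_le_mul_of_nonneg_left hx2 (pow_pos hx0 7).le
      _ = x^7 := by ring
  have hs : 0 < sin x := sin_pos_of_pos_of_lt_pi hx0
    (lt_of_le_of_lt hx1 (by linarith [Real.pi_gt_three]))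
  have hd : 0 < 1 - cos x := d_pos hx0 (by linarith)
  have hslo : 0 < x - x^3/6 := by nlinarith
  have hsx : x - x^3/6 ≤ sin x := sin_ge_poly hx0.le
  have hsx2 : sin x ≤ x := Real.sin_le hx0.le
  have ha : sin x - x*cos x ≤ x^3/3 := a_le_poly hx0.le
  have halo : x^3/3 - x^5/30 ≤ sin x - x*cos x := by nlinarith [a_ge_poly hx0.le]
  have halo0 : (0:ℝ) < x^3/3 - x^5/30 := by nlinarith [pow_pos hx0 3]
  set y := (sin x - x*cos x)/sin x with hy
  have hyg : x * (cos x / sin x) - 1 = -y := by rw [hy]; field_simp; ring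
  have hy0 : 0 < y := div_pos (lt_of_lt_of_le halo0 halo) hs
  have hylo : x^2/3 - x^4/30 ≤ y := by
    have h4 : (x^3/3 - x^5/30)/x ≤ y := div_le_div₀ (lt_of_lt_of_le halo0 halo).le halo hs hsx2
    have h5 : (x^3/3 - x^5/30)/x = x^2/3 - x^4/30 := by
      field_simp
    linarith [h5 ▸ h4]
  have hyhi : y ≤ x^2/2 := by
    have h4 : y ≤ (x^3/3)/(x - x^3/6) := div_le_div₀ (by positivity) ha hslo hsx
    have h5 : (x^3/3)/(x - x^3/6) ≤ x^2/2 := by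
      rw [div_le_iff₀ hslo]; nlinarith [mul_le_mul_of_nonneg_left hx2 (pow_pos hx0 3).le]
    linarith
  have hexp : exp (-y) ≤ 1 - y + y^2/2 := by
    have := exp_le_quad_neg (t := -y) (by linarith)
    calc exp (-y) ≤ 1 + (-y) + (-y)^2/2 := this
      _ = 1 - y + y^2/2 := by ring
  have hnum : y - y^2/2 ≤ 1 - exp (x * (cos x / sin x) - 1) := by
    rw [hyg]; linarith
  have hyq : 0 < y - y^2/2 := by nlinarith
  have hdhi : 1 - cos x ≤ x^2/2 := by linarith [Real.one_sub_sq_div_two_le_cos (x := x)]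
  calc (2/3 - x^2/15)*(1 - x^2/4) ≤ (y - y^2/2)/(x^2/2) := by
        rw [le_div_iff₀ (by positivity)]
        nlinarith [mul_nonneg (sub_nonneg.2 hylo)
          (show (0:ℝ) ≤ 1 - (y + (x^2/3 - x^4/30))/2 by nlinarith)]
    _ ≤ (y - y^2/2)/(1 - cos x) := div_le_div_of_nonneg_left hyq.le hd hdhi
    _ ≤ Ff x := (div_le_div_iff_of_pos_right hd).2 hnum

lemma Ff_tendsto_zero : Filter.Tendsto Ff (nhdsWithin 0 (Ioi 0)) (nhds (2/3)) := by
  apply tendsto_of_tendsto_of_tendsto_of_le_of_le'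
    (g := fun x => (2/3 - x^2/15)*(1 - x^2/4))
    (h := fun x => (1/3)/((1 - x^2/6)*(1/2 - x^2/24)))
  · have : Filter.Tendsto (fun x : ℝ => (2/3 - x^2/15)*(1 - x^2/4)) (nhds 0)
        (nhds ((2/3 - 0^2/15)*(1 - 0^2/4))) := by
      apply Continuous.tendsto; continuity
    norm_num at this
    exact this.mono_left nhdsWithin_le_nhds
  · have : Filter.Tendsto (fun x : ℝ => (1/3)/((1 - x^2/6)*(1/2 - x^2/24))) (nhds 0)
        (nhds ((1/3)/((1 - 0^2/6)*(1/2 - 0^2/24)))) := by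
      apply ContinuousAt.tendsto
      apply ContinuousAt.div continuousAt_const (by fun_prop) (by norm_num)
    norm_num at this
    exact this.mono_left nhdsWithin_le_nhds
  · filter_upwards [Ioo_mem_nhdsGT (show (0:ℝ) < 1 by norm_num)] with x hx
    exact Ff_lower hx.1 hx.2.le
  · filter_upwards [Ioo_mem_nhdsGT (show (0:ℝ) < 1 by norm_num)] with x hx
    exact Ff_upper hx.1 hx.2.le
theorem sandor_lemma2 :
    StrictAntiOn (fun x : ℝ => (1 - exp (x * (cos x / sin x) - 1)) / (1 - cos x))
      (Ioo 0 (π/2)) ∧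
    (fun x : ℝ => (1 - exp (x * (cos x / sin x) - 1)) / (1 - cos x)) '' Ioo 0 (π/2) =
      Ioo ((exp 1 - 1) / exp 1) (2/3) := by
  have hFf : (fun x : ℝ => (1 - exp (x * (cos x / sin x) - 1)) / (1 - cos x)) = Ff := rfl
  rw [hFf]
  constructor
  · exact SA_Ioc.mono Ioo_subset_Ioc_self
  · ext z
    simp only [mem_image, mem_Ioo]
    constructor
    · rintro ⟨x, hx, rfl⟩
      constructor
      · rw [← Ff_endpoint]
        exact SA_Ioc ⟨hx.1, hx.2.le⟩ ⟨pi_div_two_pos, le_refl _⟩ hx.2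
      · have h1 : Ff x < Ff (x/2) :=
          SA_Ioc ⟨half_pos hx.1, by linarith [hx.2]⟩ ⟨hx.1, hx.2.le⟩ (by linarith [hx.1])
        have h2 : Ff (x/2) ≤ 2/3 := by
          apply ge_of_tendsto Ff_tendsto_zero
          filter_upwards [Ioo_mem_nhdsGT (half_pos hx.1)] with t ht
          exact (SA_Ioc ⟨ht.1, by linarith [ht.2, hx.2]⟩
            ⟨half_pos hx.1, by linarith [hx.2]⟩ ht.2).le
        linarith
    · rintro ⟨hz1, hz2⟩
      have hev1 : ∀ᶠ t in nhdsWithin 0 (Ioi (0:ℝ)), z < Ff t :=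
        Ff_tendsto_zero.eventually (eventually_gt_nhds hz2)
      have hev2 : ∀ᶠ t in nhdsWithin 0 (Ioi (0:ℝ)), t ∈ Ioo (0:ℝ) (π/2) :=
        Filter.eventually_iff.2 (Ioo_mem_nhdsGT pi_div_two_pos)
      obtain ⟨x1, hx1z, hx1⟩ := (hev1.and hev2).exists
      have hcont : ContinuousWithinAt Ff (Ioo x1 (π/2)) (π/2) :=
        (contFf (π/2) ⟨pi_div_two_pos, le_rfl⟩).mono
          (fun t ht => ⟨lt_trans hx1.1 ht.1, ht.2.le⟩)
      have htd : Filter.Tendsto Ff (nhdsWithin (π/2) (Ioo x1 (π/2))) (nhds (Ff (π/2))) := hcont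
      rw [Ff_endpoint] at htd
      have hev3 : ∀ᶠ t in nhdsWithin (π/2) (Ioo x1 (π/2)), Ff t < z :=
        htd.eventually (eventually_lt_nhds hz1)
      have hev4 : ∀ᶠ t in nhdsWithin (π/2) (Ioo x1 (π/2)), t ∈ Ioo x1 (π/2) :=
        eventually_mem_nhdsWithin
      haveI := right_nhdsWithin_Ioo_neBot hx1.2
      obtain ⟨x2, hx2z, hx2mem⟩ := (hev3.and hev4).exists
      have hsub : Icc x1 x2 ⊆ Ioc 0 (π/2) :=
        fun t ht => ⟨lt_of_lt_of_le hx1.1 ht.1, le_trans ht.2 hx2mem.2.le⟩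
      have hivt := intermediate_value_Icc' hx2mem.1.le (contFf.mono hsub)
      obtain ⟨x, hxmem, hxz⟩ := hivt ⟨hx2z.le, hx1z.le⟩
      exact ⟨x, ⟨lt_of_lt_of_le hx1.1 hxmem.1, lt_of_le_of_lt hxmem.2 hx2mem.2⟩, hxz⟩
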